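/- Let x be an oscillatory solution of x'(t) = p(t)·x(τ̄(t)) with |p| ≡ 1 and τ_m := sup_{t ≥ t₀}(t - τ̄(t)) ∈ (1/e, 2]. If t₁ ≥ t₀ + τ_m + ϱ(τ_m) is a point with x(t₁) = 0 and M₀ := max{|x(v)| : v ∈ [t₁ - τ_m - ϱ(τ_m), t₁]}, then |x(t)| ≤ M₀·ψ_{τ_m}(t - t₁) for all t ≥ t₁, and |x(t)| ≤ M₀·x_{τ_m}(ϱ(τ_m) - (t₁ - t)) for all t ∈ [t₁ - τ_m, t₁]. -/

import Mathlib

open Real MeasureTheory Filter Set Topology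

noncomputable section

/-- `x` is the solution of `x'(t) = -x(t-τ)` with `x ≡ 1` on `(-∞,0]`:
`x(t) = 1 - ∫_0^t x(s-τ) ds` for `t ≥ 0`. -/
def IsXSol (τ : ℝ) (x : ℝ → ℝ) : Prop :=
  Continuous x ∧ (∀ t ≤ (0:ℝ), x t = 1) ∧
    ∀ t ≥ (0:ℝ), x t = 1 - ∫ s in (0:ℝ)..t, x (s - τ)

/-- The first positive root of a function. -/
noncomputable def firstRoot (x : ℝ → ℝ) : ℝ := sInf {t : ℝ | 0 < t ∧ x t = 0}

/-- `ψ` is the solution of `ψ'(t) = max{x_τ(ϱ(τ)+t-τ), ψ(t)}` on `[0,τ]`,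
`ψ'(t) = ψ(t)` on `[τ,∞)`, `ψ(0) = 0`. -/
def IsPsiSol (τ ρ : ℝ) (xτ ψ : ℝ → ℝ) : Prop :=
  ContinuousOn ψ (Ici (0:ℝ)) ∧ ψ 0 = 0 ∧
    (∀ t ∈ Icc (0:ℝ) τ, ψ t = ∫ s in (0:ℝ)..t, max (xτ (ρ + s - τ)) (ψ s)) ∧
    (∀ t ≥ τ, ψ t = ψ τ + ∫ s in τ..t, ψ s)

/-- A (continuous, integrated-form) solution of the delay equation
`x'(t) = p(t) x(τ̄(t))` on `[t₀,∞)`. -/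
def IsDelaySolution (p τd : ℝ → ℝ) (t₀ : ℝ) (x : ℝ → ℝ) : Prop :=
  Continuous x ∧ ∀ t ≥ t₀, x t = x t₀ + ∫ s in t₀..t, p s * x (τd s)

/-- `x` is `α`-oscillating: eventually every interval on which `x` has no zero
has length at most `α`. -/
def AlphaOscillating (α : ℝ) (x : ℝ → ℝ) : Prop :=
  ∃ T : ℝ, ∀ a b : ℝ, T ≤ a → a < b → (∀ t ∈ Ioo a b, x t ≠ 0) → b - a ≤ α

/-- `x` is oscillatory: it has arbitrarily large zeros. -/
def Oscillatory (x : ℝ → ℝ) : Prop := ∀ T : ℝ, ∃ t ≥ T, x t = 0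



lemma bddMeas_intervalIntegrable (F : ℝ → ℝ) (hF : Measurable F) {a b C : ℝ}
    (hab : a ≤ b) (h : ∀ s ∈ Set.Icc a b, |F s| ≤ C) :
    IntervalIntegrable F volume a b := by
  rw [intervalIntegrable_iff_integrableOn_Icc_of_le hab]
  refine Integrable.mono' (g := fun _ => C) ?_ hF.aestronglyMeasurable.restrict ?_
  · exact integrableOn_const measure_Icc_lt_top.ne
  · exact (ae_restrict_iff' measurableSet_Icc).2 (Eventually.of_forall fun s hs => by
      simpa [Real.norm_eq_abs] using h s hs)

lemma master_est (p τd x : ℝ → ℝ) (t₀ τm : ℝ) (hτm0 : 0 ≤ τm)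
    (hpm : Measurable p) (hploc : MeasureTheory.LocallyIntegrable p)
    (hτdm : Measurable τd) (hτdle : ∀ t, τd t ≤ t)
    (hx : IsDelaySolution p τd t₀ x)
    (hp1 : ∀ᵐ t : ℝ ∂volume, |p t| = 1)
    (hub : ∀ s, t₀ ≤ s → s - τd s ≤ τm)
    (a b : ℝ) (ha : t₀ ≤ a) (hab : a ≤ b)
    (g : ℝ → ℝ) (hg : IntervalIntegrable g volume a b)
    (hbound : ∀ s ∈ Set.Icc a b, |x (τd s)| ≤ g s) :
    |x b - x a| ≤ ∫ s in a..b, g s := by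
  have hxc : Continuous x := hx.1
  have key : ∀ c d : ℝ, t₀ ≤ c → c ≤ d →
      IntervalIntegrable (fun s => p s * x (τd s)) volume c d := by
    intro c d hc hcd
    obtain ⟨C, hC⟩ := (isCompact_Icc (a := c - τm) (b := d)).exists_bound_of_continuousOn
      hxc.continuousOn
    rw [intervalIntegrable_iff_integrableOn_Icc_of_le hcd]
    refine Integrable.mono' (g := fun s => C * |p s|) ?_
      ((hpm.mul (hxc.measurable.comp hτdm)).aestronglyMeasurable.restrict) ?_
    · exact ((hploc.integrableOn_isCompact isCompact_Icc).abs.const_mul C)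
    · refine (ae_restrict_iff' measurableSet_Icc).2 (Eventually.of_forall fun s hs => ?_)
      have h1 : τd s ∈ Set.Icc (c - τm) d := by
        constructor
        · have := hub s (hc.trans hs.1)
          linarith [hs.1]
        · exact (hτdle s).trans hs.2
      have := hC (τd s) h1
      rw [Real.norm_eq_abs, abs_mul]
      calc |p s| * |x (τd s)| ≤ |p s| * C := by
            refine mul_le_mul_of_nonneg_left ?_ (abs_nonneg _)
            simpa [Real.norm_eq_abs] using this
        _ = C * |p s| := mul_comm _ _
  have hIab := key a b (ha) hab
  have heq : x b - x a = ∫ s in a..b, p s * x (τd s) := by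
    rw [hx.2 b (ha.trans hab), hx.2 a ha]
    rw [add_sub_add_left_eq_sub]
    exact (intervalIntegral.integral_interval_sub_left (key t₀ b le_rfl (ha.trans hab))
      (key t₀ a le_rfl ha))
  rw [heq]
  calc |∫ s in a..b, p s * x (τd s)| ≤ ∫ s in a..b, ‖p s * x (τd s)‖ := by
        simpa [Real.norm_eq_abs] using intervalIntegral.norm_integral_le_integral_norm
          (f := fun s => p s * x (τd s)) (μ := volume) hab
    _ ≤ ∫ s in a..b, g s := by
        refine intervalIntegral.integral_mono_ae_restrict hab hIab.norm hg ?_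
        have h2 : ∀ᵐ s ∂(volume.restrict (Set.Icc a b)), |p s| = 1 := ae_restrict_of_ae hp1
        have h3 : ∀ᵐ s ∂(volume.restrict (Set.Icc a b)), s ∈ Set.Icc a b :=
          (ae_restrict_iff' measurableSet_Icc).2 (Eventually.of_forall fun s hs => hs)
        filter_upwards [h2, h3] with s hs1 hs2
        have := hbound s hs2
        rw [Real.norm_eq_abs, abs_mul, hs1, one_mul]
        exact this

section XTau
variable {τm : ℝ} {xτ : ℝ → ℝ} (hxτ : IsXSol τm xτ) (hτ0 : 0 < τm)
include hxτ hτ0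

lemma xsub (a b : ℝ) (ha : 0 ≤ a) (hb : 0 ≤ b) :
    xτ a - xτ b = ∫ s in a..b, xτ (s - τm) := by
  have hint : ∀ c d : ℝ, IntervalIntegrable (fun s => xτ (s - τm)) volume c d :=
    fun c d => (hxτ.1.comp (continuous_id.sub continuous_const)).intervalIntegrable c d
  rw [hxτ.2.2 a ha, hxτ.2.2 b hb]
  have := intervalIntegral.integral_interval_sub_left (f := fun s => xτ (s - τm))
    (μ := volume) (hint 0 b) (hint 0 a)
  linarith [this]

lemma xτ_linear : ∀ t ∈ Icc (0:ℝ) τm, xτ t = 1 - t := by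
  intro t ht
  rw [hxτ.2.2 t ht.1]
  have : ∀ s ∈ Set.uIcc (0:ℝ) t, xτ (s - τm) = 1 := by
    intro s hs
    rw [Set.uIcc_of_le ht.1] at hs
    exact hxτ.2.1 _ (by linarith [hs.1, hs.2, ht.2])
  rw [intervalIntegral.integral_congr this]
  simp

variable {ρ : ℝ} (hρ : ρ = firstRoot xτ)
include hρ

lemma ρ_nonneg : 0 ≤ ρ := by
  rcases Set.eq_empty_or_nonempty {t : ℝ | 0 < t ∧ xτ t = 0} with h | h
  · rw [hρ, firstRoot, h, Real.sInf_empty]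
  · rw [hρ, firstRoot]
    exact le_csInf h fun r hr => hr.1.le

lemma root_lb (hne : {t : ℝ | 0 < t ∧ xτ t = 0}.Nonempty) :
    0 < ρ ∧ xτ ρ = 0 := by
  have hlb : ∀ r ∈ {t : ℝ | 0 < t ∧ xτ t = 0}, min τm 1 ≤ r := by
    intro r hr
    rcases le_or_gt r τm with h | h
    · have hlin := xτ_linear hxτ hτ0 r ⟨hr.1.le, h⟩
      have h2 := hr.2
      rw [hlin] at h2
      have hr1 : r = 1 := by linarith
      rw [hr1]; exact min_le_right _ _
    · exact (min_le_left _ _).trans h.le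
  have h1 : 0 < ρ := by
    rw [hρ, firstRoot]
    exact lt_of_lt_of_le (lt_min hτ0 one_pos) (le_csInf hne hlb)
  refine ⟨h1, ?_⟩
  have hcl : ρ ∈ closure {t : ℝ | 0 < t ∧ xτ t = 0} := by
    rw [hρ, firstRoot]
    exact csInf_mem_closure hne ⟨0, fun r hr => hr.1.le⟩
  have hsub : closure {t : ℝ | 0 < t ∧ xτ t = 0} ⊆ {t | xτ t = 0} := by
    apply closure_minimal (fun t ht => ht.2)
    exact isClosed_eq hxτ.1 continuous_const
  exact hsub hcl

lemma xτ_pos (hne : {t : ℝ | 0 < t ∧ xτ t = 0}.Nonempty) :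
    ∀ t, 0 ≤ t → t < ρ → 0 < xτ t := by
  intro t ht htρ
  by_contra hc
  push_neg at hc
  have h0 : xτ 0 = 1 := hxτ.2.1 0 le_rfl
  have : (0:ℝ) ∈ Set.Icc (xτ t) (xτ 0) := ⟨hc, by rw [h0]; norm_num⟩
  obtain ⟨r, hr, hxr⟩ := intermediate_value_Icc' ht hxτ.1.continuousOn this
  have hr0 : 0 < r := by
    rcases hr.1.lt_or_eq with h | h
    · exact h
    · exfalso; rw [← h, h0] at hxr; norm_num at hxr
  have : ρ ≤ r := by
    rw [hρ, firstRoot]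
    exact csInf_le ⟨0, fun q hq => hq.1.le⟩ ⟨hr0, hxr⟩
  linarith [hr.2]

lemma xτ_nonneg (hne : {t : ℝ | 0 < t ∧ xτ t = 0}.Nonempty) :
    ∀ t ≤ ρ, 0 ≤ xτ t := by
  intro t ht
  rcases le_or_gt t 0 with h | h
  · rw [hxτ.2.1 t h]; norm_num
  · rcases ht.lt_or_eq with h2 | h2
    · exact (xτ_pos hxτ hτ0 hρ hne t h.le h2).le
    · rw [h2, (root_lb hxτ hτ0 hρ hne).2]

lemma xτ_le_one (hne : {t : ℝ | 0 < t ∧ xτ t = 0}.Nonempty) :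
    ∀ t ≤ ρ, xτ t ≤ 1 := by
  intro t ht
  rcases le_or_gt t 0 with h | h
  · rw [hxτ.2.1 t h]
  · rw [hxτ.2.2 t h.le]
    have : 0 ≤ ∫ s in (0:ℝ)..t, xτ (s - τm) := by
      apply intervalIntegral.integral_nonneg h.le
      intro s hs
      exact xτ_nonneg hxτ hτ0 hρ hne _ (by linarith [hs.2, ρ_nonneg hxτ hτ0 hρ, hτ0])
    linarith

lemma xτ_anti (hne : {t : ℝ | 0 < t ∧ xτ t = 0}.Nonempty) :
    AntitoneOn xτ (Iic ρ) := by
  intro a ha b hb hab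
  simp only [Set.mem_Iic] at ha hb
  rcases le_or_gt b 0 with h | h
  · rw [hxτ.2.1 a (hab.trans h), hxτ.2.1 b h]
  · rcases le_or_gt a 0 with h2 | h2
    · rw [hxτ.2.1 a h2]
      exact xτ_le_one hxτ hτ0 hρ hne b hb
    · have := xsub hxτ hτ0 a b h2.le h.le
      have hnn : 0 ≤ ∫ s in a..b, xτ (s - τm) := by
        apply intervalIntegral.integral_nonneg hab
        intro s hs
        exact xτ_nonneg hxτ hτ0 hρ hne _ (by linarith [hs.2, hτ0])
      linarith

lemma ρ_ge_one (hne : {t : ℝ | 0 < t ∧ xτ t = 0}.Nonempty) : 1 ≤ ρ := by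
  have h0 : 0 < ρ := (root_lb hxτ hτ0 hρ hne).1
  have hid := hxτ.2.2 ρ h0.le
  rw [(root_lb hxτ hτ0 hρ hne).2] at hid
  have hle : (∫ s in (0:ℝ)..ρ, xτ (s - τm)) ≤ ∫ s in (0:ℝ)..ρ, (1:ℝ) := by
    refine intervalIntegral.integral_mono_on h0.le
      ((hxτ.1.comp (continuous_id.sub continuous_const)).intervalIntegrable _ _)
      intervalIntegrable_const ?_
    intro s hs
    exact xτ_le_one hxτ hτ0 hρ hne _ (by linarith [hs.2, hτ0])
  simp only [intervalIntegral.integral_const, smul_eq_mul, mul_one, sub_zero] at hle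
  linarith

lemma xτ_id (hne : {t : ℝ | 0 < t ∧ xτ t = 0}.Nonempty) :
    ∀ a ∈ Icc (0:ℝ) ρ, xτ a = ∫ s in a..ρ, xτ (s - τm) := by
  intro a ha
  have := xsub hxτ hτ0 a ρ ha.1 (ρ_nonneg hxτ hτ0 hρ)
  rw [(root_lb hxτ hτ0 hρ hne).2] at this
  linarith

lemma ρ_empty (hemp : {t : ℝ | 0 < t ∧ xτ t = 0} = ∅) : ρ = 0 := by
  rw [hρ, firstRoot, hemp, Real.sInf_empty]

end XTau

noncomputable def iterF (M₀ t₁ τm : ℝ) : ℕ → ℝ → ℝ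
  | 0 => fun _ => M₀
  | n+1 => fun v => min M₀ (∫ s in (min v t₁)..t₁, iterF M₀ t₁ τm n (s - τm))

section BBar

variable {τm : ℝ} {xτ : ℝ → ℝ} (hxτ : IsXSol τm xτ) (hτ0 : 0 < τm)
  {ρ : ℝ} (hρ : ρ = firstRoot xτ)
  (hne : {t : ℝ | 0 < t ∧ xτ t = 0}.Nonempty)
  {M₀ t₁ : ℝ} (hM0 : 0 ≤ M₀)


include hxτ hτ0 hρ hne hM0

lemma bbar_nonneg : ∀ v ≤ t₁, 0 ≤ M₀ * xτ (ρ - (t₁ - v)) := by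
  intro v hv
  exact mul_nonneg hM0 (xτ_nonneg hxτ hτ0 hρ hne _ (by linarith))

lemma bbar_le : ∀ v ≤ t₁, M₀ * xτ (ρ - (t₁ - v)) ≤ M₀ := by
  intro v hv
  exact mul_le_of_le_one_right hM0 (xτ_le_one hxτ hτ0 hρ hne _ (by linarith))

lemma bbar_integral : ∀ v ∈ Icc (t₁ - ρ) t₁,
    (∫ s in v..t₁, M₀ * xτ (ρ - (t₁ - (s - τm)))) = M₀ * xτ (ρ - (t₁ - v)) := by
  intro v hv
  set c := t₁ - ρ + τm with hc
  have h1 : (fun s => M₀ * xτ (ρ - (t₁ - (s - τm)))) = fun s => M₀ * xτ (s - c) := by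
    funext s; congr 1; congr 1; rw [hc]; ring
  rw [h1, intervalIntegral.integral_const_mul]
  have h2 : (∫ s in v..t₁, xτ (s - c)) = ∫ s in (v - c)..(t₁ - c), xτ s :=
    intervalIntegral.integral_comp_sub_right _ c
  have ha : ρ - (t₁ - v) ∈ Icc (0:ℝ) ρ := ⟨by linarith [hv.1], by linarith [hv.2]⟩
  have h3 := xτ_id hxτ hτ0 hρ hne _ ha
  have h4 : (∫ s in (ρ - (t₁ - v))..ρ, xτ (s - τm))
      = ∫ s in (ρ - (t₁ - v) - τm)..(ρ - τm), xτ s :=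
    intervalIntegral.integral_comp_sub_right _ τm
  have e1 : v - c = ρ - (t₁ - v) - τm := by rw [hc]; ring
  have e2 : t₁ - c = ρ - τm := by rw [hc]; ring
  rw [h2, e1, e2, ← h4, ← h3]

lemma bbar_integral_ge : ∀ v ≤ t₁ - ρ,
    M₀ ≤ ∫ s in v..t₁, M₀ * xτ (ρ - (t₁ - (s - τm))) := by
  intro v hv
  have hcont : Continuous fun s => M₀ * xτ (ρ - (t₁ - (s - τm))) := by
    apply continuous_const.mul
    exact hxτ.1.comp (by continuity)
  have hρ0 : 0 < ρ := (root_lb hxτ hτ0 hρ hne).1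
  have hsplit := intervalIntegral.integral_add_adjacent_intervals
    (μ := volume) (a := v) (b := t₁ - ρ) (c := t₁)
    (f := fun s => M₀ * xτ (ρ - (t₁ - (s - τm))))
    (hcont.intervalIntegrable _ _) (hcont.intervalIntegrable _ _)
  have h2 := bbar_integral hxτ hτ0 hρ hne hM0 (t₁ - ρ) ⟨le_rfl, by linarith⟩
  have h0 : xτ (ρ - (t₁ - (t₁ - ρ))) = 1 := by
    have : ρ - (t₁ - (t₁ - ρ)) = 0 := by ring
    rw [this]; exact hxτ.2.1 0 le_rfl
  rw [h0, mul_one] at h2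
  have h1 : 0 ≤ ∫ s in v..(t₁ - ρ), M₀ * xτ (ρ - (t₁ - (s - τm))) := by
    apply intervalIntegral.integral_nonneg hv
    intro s hs
    refine mul_nonneg hM0 (xτ_nonneg hxτ hτ0 hρ hne _ ?_)
    have := hs.2
    linarith
  linarith [hsplit, h1, h2]

end BBar

lemma iterF_inv
    (p τd x : ℝ → ℝ) (t₀ τm : ℝ) (hτ0 : 0 < τm)
    (hpm : Measurable p) (hploc : MeasureTheory.LocallyIntegrable p)
    (hτdm : Measurable τd) (hτdle : ∀ t, τd t ≤ t)
    (hx : IsDelaySolution p τd t₀ x)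
    (hp1 : ∀ᵐ t : ℝ ∂volume, |p t| = 1)
    (hub : ∀ s, t₀ ≤ s → s - τd s ≤ τm)
    (xτ : ℝ → ℝ) (hxτ : IsXSol τm xτ) (ρ : ℝ) (hρ : ρ = firstRoot xτ)
    (hne : {t : ℝ | 0 < t ∧ xτ t = 0}.Nonempty)
    (t₁ M₀ : ℝ) (ht₁ : t₀ + τm + ρ ≤ t₁) (hzero : x t₁ = 0) (hM0 : 0 ≤ M₀)
    (hM : ∀ v ∈ Icc (t₁ - τm - ρ) t₁, |x v| ≤ M₀) :
    ∀ n, Continuous (iterF M₀ t₁ τm n) ∧ (∀ v, 0 ≤ iterF M₀ t₁ τm n v) ∧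
      (∀ v, iterF M₀ t₁ τm n v ≤ M₀) ∧ Antitone (iterF M₀ t₁ τm n) ∧
      (∀ v, v ≤ t₁ - ρ → iterF M₀ t₁ τm n v = M₀) ∧
      (∀ v, v ≤ t₁ → M₀ * xτ (ρ - (t₁ - v)) ≤ iterF M₀ t₁ τm n v) ∧
      (∀ v ∈ Icc (t₁ - ρ) t₁, |x v| ≤ iterF M₀ t₁ τm n v) := by
  have hρ0 : 0 < ρ := (root_lb hxτ hτ0 hρ hne).1
  intro n
  induction n with
  | zero =>
    refine ⟨continuous_const, fun v => hM0, fun v => le_rfl, fun u v _ => le_rfl,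
      fun v _ => rfl, fun v hv => bbar_le hxτ hτ0 hρ hne hM0 v hv, fun v hv => ?_⟩
    exact hM v ⟨by linarith [hv.1], hv.2⟩
  | succ n IH =>
    obtain ⟨hFc, hF0, hFle, hFanti, hFeq, hFbb, hFu⟩ := IH
    set F := iterF M₀ t₁ τm n with hFdef
    have hdef : iterF M₀ t₁ τm (n+1)
        = fun v => min M₀ (∫ s in (min v t₁)..t₁, F (s - τm)) := rfl
    have hFshift : Continuous fun s => F (s - τm) :=
      hFc.comp (continuous_id.sub continuous_const)
    set G := fun v => ∫ s in (min v t₁)..t₁, F (s - τm) with hGdef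
    -- continuity of G
    have hprim : Continuous fun w => ∫ s in t₁..w, F (s - τm) :=
      intervalIntegral.continuous_primitive (fun a b => hFshift.intervalIntegrable a b) t₁
    have hGc : Continuous G := by
      have hGeq : G = fun v => -(∫ s in t₁..(min v t₁), F (s - τm)) :=
        funext fun v => intervalIntegral.integral_symm t₁ (min v t₁)
      rw [hGeq]
      exact (hprim.comp (continuous_id.min continuous_const)).neg
    -- nonneg of G
    have hG0 : ∀ v, 0 ≤ G v := by
      intro v
      apply intervalIntegral.integral_nonneg (min_le_right v t₁)
      intro s _
      exact hF0 _
    -- antitone of G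
    have hGanti : ∀ u v : ℝ, u ≤ v → G v ≤ G u := by
      intro u v huv
      have hadj := intervalIntegral.integral_add_adjacent_intervals (μ := volume)
        (a := min u t₁) (b := min v t₁) (c := t₁) (f := fun s => F (s - τm))
        (hFshift.intervalIntegrable _ _) (hFshift.intervalIntegrable _ _)
      have h1 : 0 ≤ ∫ s in (min u t₁)..(min v t₁), F (s - τm) := by
        apply intervalIntegral.integral_nonneg (min_le_min huv le_rfl)
        intro s _; exact hF0 _
      simp only [hGdef]
      linarith [hadj, h1]
    -- G dominates the bbar integral
    have hGbb : ∀ v, v ≤ t₁ →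
        (∫ s in v..t₁, M₀ * xτ (ρ - (t₁ - (s - τm)))) ≤ G v := by
      intro v hv
      have : min v t₁ = v := min_eq_left hv
      simp only [hGdef, this]
      refine intervalIntegral.integral_mono_on hv ?_ (hFshift.intervalIntegrable _ _) ?_
      · exact (continuous_const.mul (hxτ.1.comp (by continuity))).intervalIntegrable _ _
      · intro s hs
        have harg : ρ - (t₁ - (s - τm)) = ρ - (t₁ - (s - τm)) := rfl
        exact hFbb (s - τm) (by linarith [hs.2, hτ0])
    have hGgeM : ∀ v, v ≤ t₁ - ρ → M₀ ≤ G v := by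
      intro v hv
      exact (bbar_integral_ge hxτ hτ0 hρ hne hM0 v hv).trans
        (hGbb v (by linarith))
    rw [hdef]
    refine ⟨continuous_const.min hGc, fun v => le_min hM0 (hG0 v), fun v => min_le_left _ _,
      fun u v huv => min_le_min le_rfl (hGanti u v huv), ?_, ?_, ?_⟩
    · intro v hv
      exact min_eq_left (hGgeM v hv)
    · intro v hv
      refine le_min (bbar_le hxτ hτ0 hρ hne hM0 v hv) ?_
      rcases le_or_gt v (t₁ - ρ) with h | h
      · have harg : xτ (ρ - (t₁ - v)) ≤ 1 := by
          rw [hxτ.2.1 _ (by linarith)]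
        calc M₀ * xτ (ρ - (t₁ - v)) ≤ M₀ := mul_le_of_le_one_right hM0 harg
          _ ≤ G v := hGgeM v h
      · calc M₀ * xτ (ρ - (t₁ - v))
            = ∫ s in v..t₁, M₀ * xτ (ρ - (t₁ - (s - τm))) :=
              (bbar_integral hxτ hτ0 hρ hne hM0 v ⟨h.le, hv⟩).symm
          _ ≤ G v := hGbb v hv
    · intro v hv
      refine le_min (hM v ⟨by linarith [hv.1], hv.2⟩) ?_
      have hvt₀ : t₀ ≤ v := by linarith [hv.1]
      have hbound : ∀ s ∈ Set.Icc v t₁, |x (τd s)| ≤ F (s - τm) := by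
        intro s hs
        have hstτ : s - τm ≤ τd s := by
          have := hub s (hvt₀.trans hs.1)
          linarith
        rcases le_or_gt (τd s) (t₁ - ρ) with h | h
        · have : F (s - τm) = M₀ := hFeq _ (by linarith)
          rw [this]
          refine hM (τd s) ⟨?_, (hτdle s).trans hs.2⟩
          have := hv.1
          linarith [hs.1]
        · calc |x (τd s)| ≤ F (τd s) := hFu (τd s) ⟨h.le, (hτdle s).trans hs.2⟩
            _ ≤ F (s - τm) := hFanti hstτ
      have hmaster := master_est p τd x t₀ τm hτ0.le hpm hploc hτdm hτdle hx hp1 hub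
        v t₁ hvt₀ hv.2 (fun s => F (s - τm)) (hFshift.intervalIntegrable _ _) hbound
      rw [hzero, zero_sub, abs_neg] at hmaster
      have : min v t₁ = v := min_eq_left hv.2
      simp only [hGdef, this]
      exact hmaster

set_option maxHeartbeats 1000000 in
lemma part2_core
    (p τd x : ℝ → ℝ) (t₀ τm : ℝ) (hτ0 : 0 < τm)
    (hpm : Measurable p) (hploc : MeasureTheory.LocallyIntegrable p)
    (hτdm : Measurable τd) (hτdle : ∀ t, τd t ≤ t)
    (hx : IsDelaySolution p τd t₀ x)
    (hp1 : ∀ᵐ t : ℝ ∂volume, |p t| = 1)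
    (hub : ∀ s, t₀ ≤ s → s - τd s ≤ τm)
    (xτ : ℝ → ℝ) (hxτ : IsXSol τm xτ) (ρ : ℝ) (hρ : ρ = firstRoot xτ)
    (hne : {t : ℝ | 0 < t ∧ xτ t = 0}.Nonempty)
    (t₁ M₀ : ℝ) (ht₁ : t₀ + τm + ρ ≤ t₁) (hzero : x t₁ = 0) (hM0 : 0 < M₀)
    (hM : ∀ v ∈ Icc (t₁ - τm - ρ) t₁, |x v| ≤ M₀) :
    ∀ v ∈ Icc (t₁ - ρ) t₁, |x v| ≤ M₀ * xτ (ρ - (t₁ - v)) := by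
  have hρ0 : 0 < ρ := (root_lb hxτ hτ0 hρ hne).1
  set I := iterF M₀ t₁ τm with hIdef
  have inv := iterF_inv p τd x t₀ τm hτ0 hpm hploc hτdm hτdle hx hp1 hub
    xτ hxτ ρ hρ hne t₁ M₀ ht₁ hzero hM0.le hM
  -- decreasing in n
  have hdec : ∀ n v, I (n+1) v ≤ I n v := by
    intro n
    induction n with
    | zero => intro v; exact min_le_left _ _
    | succ n IHn =>
      intro v
      refine min_le_min le_rfl ?_
      refine intervalIntegral.integral_mono_on (min_le_right v t₁) ?_ ?_ ?_
      · exact ((inv (n+1)).1.comp (continuous_id.sub continuous_const)).intervalIntegrable _ _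
      · exact ((inv n).1.comp (continuous_id.sub continuous_const)).intervalIntegrable _ _
      · intro s _; exact IHn (s - τm)
  have hanti_n : ∀ v, Antitone (fun n => I n v) :=
    fun v => antitone_nat_of_succ_le (fun n => hdec n v)
  set f := fun v => ⨅ n, I n v with hfdef
  have hbdd : ∀ v, BddBelow (Set.range fun n => I n v) :=
    fun v => ⟨0, fun y ⟨n, hn⟩ => hn ▸ (inv n).2.1 v⟩
  have htend : ∀ v, Tendsto (fun n => I n v) atTop (𝓝 (f v)) :=
    fun v => tendsto_atTop_ciInf (hanti_n v) (hbdd v)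
  have hfle : ∀ v n, f v ≤ I n v := fun v n => ciInf_le (hbdd v) n
  have hf0 : ∀ v, 0 ≤ f v := fun v => le_ciInf fun n => (inv n).2.1 v
  have hfM : ∀ v, f v ≤ M₀ := fun v => (hfle v 0)
  have hfanti : ∀ u v : ℝ, u ≤ v → f v ≤ f u :=
    fun u v huv => le_ciInf fun n => (hfle v n).trans ((inv n).2.2.2.1 huv)
  have hfhi : ∀ v, v ≤ t₁ - ρ → f v = M₀ :=
    fun v hv => le_antisymm (hfM v) (le_ciInf fun n => ((inv n).2.2.2.2.1 v hv).ge)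
  have hfbb : ∀ v, v ≤ t₁ → M₀ * xτ (ρ - (t₁ - v)) ≤ f v :=
    fun v hv => le_ciInf fun n => (inv n).2.2.2.2.2.1 v hv
  have hfu : ∀ v ∈ Icc (t₁ - ρ) t₁, |x v| ≤ f v :=
    fun v hv => le_ciInf fun n => (inv n).2.2.2.2.2.2 v hv
  have hfm : Measurable f :=
    measurable_of_tendsto_metrizable (fun n => (inv n).1.measurable)
      (tendsto_pi_nhds.2 htend)
  have hfshift_m : Measurable fun s => f (s - τm) :=
    hfm.comp (measurable_id.sub measurable_const)
  have hfabs : ∀ w, |f w| ≤ M₀ := fun w => by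
    rw [abs_of_nonneg (hf0 w)]; exact hfM w
  have hfint : ∀ a b : ℝ, IntervalIntegrable (fun s => f (s - τm)) volume a b := by
    intro a b
    rcases le_total a b with h | h
    · exact bddMeas_intervalIntegrable _ hfshift_m h (fun s _ => hfabs _)
    · exact (bddMeas_intervalIntegrable _ hfshift_m h (fun s _ => hfabs _)).symm
  set Gf := fun v => ∫ s in v..t₁, f (s - τm) with hGfdef
  have hGfsub : ∀ u v : ℝ, Gf u - Gf v = ∫ s in u..v, f (s - τm) := by
    intro u v
    have hadj := intervalIntegral.integral_add_adjacent_intervals (μ := volume)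
      (a := u) (b := v) (c := t₁) (f := fun s => f (s - τm)) (hfint u v) (hfint v t₁)
    simp only [hGfdef]
    linarith
  have hGflip : ∀ u v : ℝ, |Gf u - Gf v| ≤ M₀ * |u - v| := by
    intro u v
    rw [hGfsub u v]
    have := intervalIntegral.norm_integral_le_of_norm_le_const
      (C := M₀) (a := u) (b := v) (f := fun s => f (s - τm))
      (fun s _ => by simpa [Real.norm_eq_abs] using hfabs (s - τm))
    simpa [Real.norm_eq_abs, abs_sub_comm u v] using this
  have hGfc : Continuous Gf := by
    rw [Metric.continuous_iff]
    intro v ε hε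
    refine ⟨ε / (M₀ + 1), by positivity, fun u hu => ?_⟩
    rw [Real.dist_eq] at hu ⊢
    calc |Gf u - Gf v| ≤ M₀ * |u - v| := hGflip u v
      _ < (M₀ + 1) * (ε / (M₀ + 1)) := by
          apply lt_of_le_of_lt (mul_le_mul_of_nonneg_right (le_add_of_nonneg_right zero_le_one)
            (abs_nonneg _))
          exact mul_lt_mul_of_pos_left hu (by linarith)
      _ = ε := by field_simp
  -- the fixed point equation
  have hkey : ∀ v, v ≤ t₁ → f v = min M₀ (Gf v) := by
    intro v hv
    have hmin : min v t₁ = v := min_eq_left hv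
    have h1 : Tendsto (fun n => I (n+1) v) atTop (𝓝 (f v)) :=
      (htend v).comp (tendsto_add_atTop_nat 1)
    have h2 : Tendsto (fun n => ∫ s in v..t₁, I n (s - τm)) atTop (𝓝 (Gf v)) := by
      apply intervalIntegral.tendsto_integral_filter_of_dominated_convergence
        (bound := fun _ => M₀)
      · exact Eventually.of_forall fun n =>
          ((inv n).1.comp (continuous_id.sub continuous_const)).aestronglyMeasurable
      · refine Eventually.of_forall fun n => Eventually.of_forall fun s _ => ?_
        rw [Real.norm_eq_abs, abs_of_nonneg ((inv n).2.1 _)]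
        exact (inv n).2.2.1 _
      · exact intervalIntegrable_const
      · exact Eventually.of_forall fun s _ => htend (s - τm)
    have h3 : Tendsto (fun n => I (n+1) v) atTop (𝓝 (min M₀ (Gf v))) := by
      have : (fun n => I (n+1) v) = fun n => min M₀ (∫ s in v..t₁, I n (s - τm)) := by
        funext n
        show min M₀ (∫ s in (min v t₁)..t₁, I n (s - τm)) = _
        rw [hmin]
      rw [this]
      exact tendsto_const_nhds.min h2
    exact tendsto_nhds_unique h1 h3
  have hfc : ContinuousOn f (Iic t₁) :=
    (continuous_const.min hGfc).continuousOn.congr fun v hv => hkey v hv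
  -- the breakpoint
  set A := {a | a ∈ Icc (t₁ - ρ) t₁ ∧ f a = M₀} with hAdef
  have hAne : A.Nonempty := ⟨t₁ - ρ, ⟨le_rfl, by linarith⟩, hfhi _ le_rfl⟩
  have hAbdd : BddAbove A := ⟨t₁, fun a ha => ha.1.2⟩
  have hAclosed : IsClosed A := by
    have : A = Icc (t₁ - ρ) t₁ ∩ f ⁻¹' {M₀} := by
      ext a; simp [hAdef, Set.mem_inter_iff, and_comm]
    rw [this]
    apply ContinuousOn.preimage_isClosed_of_isClosed
      (hfc.mono (fun a (ha : a ∈ Icc _ _) => ha.2)) isClosed_Icc isClosed_singleton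
  set a₀ := sSup A with ha₀def
  have ha₀mem : a₀ ∈ A := hAclosed.csSup_mem hAne hAbdd
  have ha₀Icc : a₀ ∈ Icc (t₁ - ρ) t₁ := ha₀mem.1
  have hfa₀ : f a₀ = M₀ := ha₀mem.2
  have hft₁ : f t₁ = 0 := by
    have := hkey t₁ le_rfl
    simp only [hGfdef, intervalIntegral.integral_same] at this
    rw [this, min_eq_right hM0.le]
  have ha₀lt : a₀ < t₁ := by
    rcases ha₀Icc.2.lt_or_eq with h | h
    · exact h
    · exfalso; rw [h] at hfa₀; rw [hft₁] at hfa₀; linarith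
  have hflt : ∀ v, a₀ < v → v ≤ t₁ → f v < M₀ := by
    intro v hav hvt
    rcases (hfM v).lt_or_eq with h | h
    · exact h
    · exfalso
      have : v ∈ A := ⟨⟨by linarith [ha₀Icc.1], hvt⟩, h⟩
      exact absurd (le_csSup hAbdd this) (not_le.2 hav)
  have hfeqG : ∀ v, a₀ < v → v ≤ t₁ → f v = Gf v := by
    intro v hav hvt
    have h1 := hkey v hvt
    have h2 := hflt v hav hvt
    rcases le_total M₀ (Gf v) with h | h
    · rw [min_eq_left h] at h1; exact absurd h1.symm.le (not_le.2 h2)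
    · rw [min_eq_right h] at h1; exact h1
  -- Gf a₀ = M₀
  have hGa₀ : Gf a₀ = M₀ := by
    have hsub : Ioo a₀ t₁ ⊆ Iic t₁ := fun y hy => hy.2.le
    have hne2 : (𝓝[Set.Ioo a₀ t₁] a₀).NeBot := by
      rw [nhdsWithin_Ioo_eq_nhdsGT ha₀lt]
      infer_instance
    have h1 : Tendsto Gf (𝓝[Set.Ioo a₀ t₁] a₀) (𝓝 (Gf a₀)) :=
      (hGfc.tendsto a₀).mono_left nhdsWithin_le_nhds
    have h2 : Tendsto f (𝓝[Set.Ioo a₀ t₁] a₀) (𝓝 (f a₀)) :=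
      (hfc.continuousWithinAt (by exact ha₀Icc.2 : a₀ ∈ Iic t₁)).mono_left
        (nhdsWithin_mono _ hsub)
    have heq : f =ᶠ[𝓝[Set.Ioo a₀ t₁] a₀] Gf := by
      filter_upwards [self_mem_nhdsWithin] with v hv
      exact hfeqG v hv.1 hv.2.le
    have := tendsto_nhds_unique (h2.congr' heq) h1
    rw [← this, hfa₀]
  have hfeqG' : ∀ v ∈ Icc a₀ t₁, f v = Gf v := by
    intro v hv
    rcases hv.1.lt_or_eq with h | h
    · exact hfeqG v h hv.2
    · rw [← h, hfa₀, hGa₀]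
  -- f = M₀ on Iic a₀
  have hfM₀below : ∀ v, v ≤ a₀ → f v = M₀ :=
    fun v hv => le_antisymm (hfM v) (hfa₀ ▸ hfanti v a₀ hv)
  -- integral identity for f on [a₀, t₁]
  have hfid : ∀ v ∈ Icc a₀ t₁, f v = M₀ - ∫ s in a₀..v, f (s - τm) := by
    intro v hv
    rw [hfeqG' v hv]
    have := hGfsub a₀ v
    rw [hGa₀] at this
    linarith
  -- φ and its identity
  set φ := fun v => M₀ * xτ (v - a₀) with hφdef
  have hφid : ∀ v, a₀ ≤ v → φ v = M₀ - ∫ s in a₀..v, φ (s - τm) := by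
    intro v hv
    have h1 := hxτ.2.2 (v - a₀) (by linarith)
    have h2 : (∫ s in a₀..v, xτ (s - a₀ - τm)) = ∫ r in (0:ℝ)..(v - a₀), xτ (r - τm) := by
      have h2' := intervalIntegral.integral_comp_sub_right (a := a₀) (b := v)
        (fun r => xτ (r - τm)) a₀
      rw [sub_self] at h2'
      exact h2'
    have h3 : (∫ s in a₀..v, φ (s - τm)) = M₀ * ∫ s in a₀..v, xτ (s - a₀ - τm) := by
      rw [← intervalIntegral.integral_const_mul]
      congr 1; funext s; simp only [hφdef]; congr 2; ring
    rw [hφdef]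
    simp only
    rw [h3, h2, h1]
    ring
  -- equality f = φ on [a₀, t₁] by slab induction
  have hslab : ∀ k : ℕ, ∀ v ∈ Icc a₀ t₁, v ≤ a₀ + k * τm → f v = φ v := by
    intro k
    induction k with
    | zero =>
      intro v hv hvk
      simp only [Nat.cast_zero, zero_mul, add_zero] at hvk
      have : v = a₀ := le_antisymm hvk hv.1
      rw [this, hfa₀, hφdef]
      simp only [sub_self]
      rw [hxτ.2.1 0 le_rfl, mul_one]
    | succ k IHk =>
      intro v hv hvk
      have hzero_int : ∀ s ∈ Set.uIcc a₀ v, f (s - τm) - φ (s - τm) = 0 := by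
        intro s hs
        rw [Set.uIcc_of_le hv.1] at hs
        rcases le_or_gt (s - τm) a₀ with h | h
        · rw [hfM₀below _ h, hφdef]
          simp only
          rw [hxτ.2.1 _ (by linarith), mul_one, sub_self]
        · have h1 : s - τm ∈ Icc a₀ t₁ := ⟨h.le, by linarith [hs.2, hv.2, hτ0]⟩
          have h2 : s - τm ≤ a₀ + k * τm := by
            have := hs.2
            push_cast at hvk ⊢
            linarith
          rw [IHk _ h1 h2, sub_self]
      have h4 : (∫ s in a₀..v, f (s - τm)) = ∫ s in a₀..v, φ (s - τm) := by
        have h5 : (∫ s in a₀..v, (f (s - τm) - φ (s - τm))) = 0 := by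
          rw [intervalIntegral.integral_congr hzero_int]
          simp
        have hφcont : Continuous φ := by
          rw [hφdef]
          exact continuous_const.mul (hxτ.1.comp (continuous_id.sub continuous_const))
        have hφsc : Continuous fun s : ℝ => φ (s - τm) :=
          hφcont.comp (continuous_id.sub continuous_const)
        have h6 := intervalIntegral.integral_sub (μ := volume) (a := a₀) (b := v)
          (f := fun s => f (s - τm)) (g := fun s => φ (s - τm))
          (hfint a₀ v) (hφsc.intervalIntegrable a₀ v)
        have : (∫ s in a₀..v, (f (s - τm) - φ (s - τm)))
            = (∫ s in a₀..v, f (s - τm)) - ∫ s in a₀..v, φ (s - τm) := by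
          exact h6
        rw [this] at h5
        linarith
      rw [hfid v hv, hφid v hv.1, h4]
  -- conclude a₀ = t₁ - ρ
  obtain ⟨k, hk⟩ := exists_nat_gt ((t₁ - a₀) / τm)
  have hkk : t₁ ≤ a₀ + k * τm := by
    rw [div_lt_iff₀ hτ0] at hk
    linarith
  have hft₁φ : f t₁ = φ t₁ := hslab k t₁ ⟨ha₀lt.le, le_rfl⟩ hkk
  have hxτzero : xτ (t₁ - a₀) = 0 := by
    rw [hft₁] at hft₁φ
    have := hft₁φ.symm
    rw [hφdef] at this
    simp only at this
    rcases mul_eq_zero.1 this with h | h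
    · exact absurd h (ne_of_gt hM0)
    · exact h
  have hρle : ρ ≤ t₁ - a₀ := by
    rw [hρ, firstRoot]
    exact csInf_le ⟨0, fun q hq => hq.1.le⟩ ⟨by linarith, hxτzero⟩
  have ha₀eq : a₀ = t₁ - ρ := le_antisymm (by linarith) ha₀Icc.1
  -- final bound
  intro v hv
  calc |x v| ≤ f v := hfu v hv
    _ = φ v := hslab k v ⟨by rw [ha₀eq]; exact hv.1, hv.2⟩
        (by rw [ha₀eq] at hkk ⊢; linarith [hv.2])
    _ = M₀ * xτ (ρ - (t₁ - v)) := by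
        rw [hφdef]
        simp only
        congr 2
        rw [ha₀eq]
        ring


lemma xτ_nonneg_all {τm : ℝ} {xτ : ℝ → ℝ} (hxτ : IsXSol τm xτ) (hτ0 : 0 < τm)
    {ρ : ℝ} (hρ : ρ = firstRoot xτ) : ∀ t ≤ ρ, 0 ≤ xτ t := by
  intro t ht
  rcases Set.eq_empty_or_nonempty {t : ℝ | 0 < t ∧ xτ t = 0} with hemp | hne
  · have h0 := ρ_empty hxτ hτ0 hρ hemp
    rw [hxτ.2.1 t (by rw [h0] at ht; exact ht)]
    norm_num
  · exact xτ_nonneg hxτ hτ0 hρ hne t ht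

lemma xτ_anti_all {τm : ℝ} {xτ : ℝ → ℝ} (hxτ : IsXSol τm xτ) (hτ0 : 0 < τm)
    {ρ : ℝ} (hρ : ρ = firstRoot xτ) : AntitoneOn xτ (Iic ρ) := by
  rcases Set.eq_empty_or_nonempty {t : ℝ | 0 < t ∧ xτ t = 0} with hemp | hne
  · have h0 := ρ_empty hxτ hτ0 hρ hemp
    intro a ha b hb _
    rw [mem_Iic, h0] at ha hb
    rw [hxτ.2.1 a ha, hxτ.2.1 b hb]
  · exact xτ_anti hxτ hτ0 hρ hne

lemma part2_full
    (p τd x : ℝ → ℝ) (t₀ τm : ℝ) (hτ0 : 0 < τm)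
    (hpm : Measurable p) (hploc : MeasureTheory.LocallyIntegrable p)
    (hτdm : Measurable τd) (hτdle : ∀ t, τd t ≤ t)
    (hx : IsDelaySolution p τd t₀ x)
    (hp1 : ∀ᵐ t : ℝ ∂volume, |p t| = 1)
    (hub : ∀ s, t₀ ≤ s → s - τd s ≤ τm)
    (xτ : ℝ → ℝ) (hxτ : IsXSol τm xτ) (ρ : ℝ) (hρ : ρ = firstRoot xτ)
    (t₁ M₀ : ℝ) (ht₁ : t₀ + τm + ρ ≤ t₁) (hzero : x t₁ = 0) (hM0 : 0 ≤ M₀)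
    (hM : ∀ v ∈ Icc (t₁ - τm - ρ) t₁, |x v| ≤ M₀) :
    ∀ v ∈ Icc (t₁ - τm) t₁, |x v| ≤ M₀ * xτ (ρ - (t₁ - v)) := by
  have hρ0 : 0 ≤ ρ := ρ_nonneg hxτ hτ0 hρ
  intro v hv
  rcases Set.eq_empty_or_nonempty {t : ℝ | 0 < t ∧ xτ t = 0} with hemp | hne
  · have h0 : ρ = 0 := ρ_empty hxτ hτ0 hρ hemp
    have h1 : xτ (ρ - (t₁ - v)) = 1 := hxτ.2.1 _ (by rw [h0]; linarith [hv.2])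
    rw [h1, mul_one]
    refine hM v ⟨?_, hv.2⟩
    have := hv.1
    linarith
  · rcases hM0.lt_or_eq with hpos | heq0
    · rcases le_or_gt v (t₁ - ρ) with h | h
      · have h1 : xτ (ρ - (t₁ - v)) = 1 := hxτ.2.1 _ (by linarith)
        rw [h1, mul_one]
        exact hM v ⟨by linarith [hv.1], hv.2⟩
      · exact part2_core p τd x t₀ τm hτ0 hpm hploc hτdm hτdle hx hp1 hub
          xτ hxτ ρ hρ hne t₁ M₀ ht₁ hzero hpos hM v ⟨h.le, hv.2⟩
    · have h1 : |x v| ≤ M₀ := hM v ⟨by linarith [hv.1], hv.2⟩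
      rw [← heq0] at h1 ⊢
      rw [zero_mul]
      exact h1

set_option maxHeartbeats 1000000 in
lemma part1_core
    (p τd x : ℝ → ℝ) (t₀ τm : ℝ) (hτ0 : 0 < τm)
    (hpm : Measurable p) (hploc : MeasureTheory.LocallyIntegrable p)
    (hτdm : Measurable τd) (hτdle : ∀ t, τd t ≤ t)
    (hx : IsDelaySolution p τd t₀ x)
    (hp1 : ∀ᵐ t : ℝ ∂volume, |p t| = 1)
    (hub : ∀ s, t₀ ≤ s → s - τd s ≤ τm)
    (xτ : ℝ → ℝ) (hxτ : IsXSol τm xτ) (ρ : ℝ) (hρ : ρ = firstRoot xτ)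
    (ψ : ℝ → ℝ) (hψ : IsPsiSol τm ρ xτ ψ)
    (t₁ M₀ : ℝ) (ht₁ : t₀ + τm + ρ ≤ t₁) (hzero : x t₁ = 0) (hM0 : 0 ≤ M₀)
    (hP2 : ∀ v ∈ Icc (t₁ - τm) t₁, |x v| ≤ M₀ * xτ (ρ - (t₁ - v))) :
    ∀ t ≥ t₁, |x t| ≤ M₀ * ψ (t - t₁) := by
  have hρ0 : 0 ≤ ρ := ρ_nonneg hxτ hτ0 hρ
  have hxc : Continuous x := hx.1
  set Ψ : ℝ → ℝ := fun u => ψ (max u 0) with hΨdef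
  have hΨc : Continuous Ψ :=
    hψ.1.comp_continuous (continuous_id.max continuous_const)
      (fun u => mem_Ici.2 (le_max_right _ _))
  have hΨeq : ∀ u, 0 ≤ u → Ψ u = ψ u := by
    intro u hu; simp only [hΨdef, max_eq_left hu]
  have hΨ0 : Ψ 0 = 0 := by rw [hΨeq 0 le_rfl, hψ.2.1]
  -- phase 1 identity
  have hid1 : ∀ u ∈ Icc (0:ℝ) τm, Ψ u = ∫ r in (0:ℝ)..u, max (xτ (ρ + r - τm)) (Ψ r) := by
    intro u hu
    rw [hΨeq u hu.1, hψ.2.2.1 u hu]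
    apply intervalIntegral.integral_congr
    intro r hr
    rw [Set.uIcc_of_le hu.1] at hr
    show max (xτ (ρ + r - τm)) (ψ r) = max (xτ (ρ + r - τm)) (Ψ r)
    rw [hΨeq r hr.1]
  -- phase 2 identity
  have hid2 : ∀ u, τm ≤ u → Ψ u = Ψ τm + ∫ r in τm..u, Ψ r := by
    intro u hu
    rw [hΨeq u (hτ0.le.trans hu), hΨeq τm hτ0.le, hψ.2.2.2 u hu]
    congr 1
    apply intervalIntegral.integral_congr
    intro r hr
    rw [Set.uIcc_of_le hu] at hr
    show ψ r = Ψ r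
    rw [hΨeq r (hτ0.le.trans hr.1)]
  -- phase 1 monotone
  have hmono1 : ∀ a b : ℝ, 0 ≤ a → a ≤ b → b ≤ τm → Ψ a ≤ Ψ b := by
    intro a b ha hab hb
    rw [hid1 a ⟨ha, hab.trans hb⟩, hid1 b ⟨ha.trans hab, hb⟩]
    have hintc : Continuous fun r => max (xτ (ρ + r - τm)) (Ψ r) :=
      (hxτ.1.comp ((continuous_const.add continuous_id).sub continuous_const)).max hΨc
    have hadj := intervalIntegral.integral_add_adjacent_intervals (μ := volume)
      (a := (0:ℝ)) (b := a) (c := b) (f := fun r => max (xτ (ρ + r - τm)) (Ψ r))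
      (hintc.intervalIntegrable _ _) (hintc.intervalIntegrable _ _)
    have hnn : 0 ≤ ∫ r in a..b, max (xτ (ρ + r - τm)) (Ψ r) := by
      apply intervalIntegral.integral_nonneg hab
      intro r hr
      refine le_trans (xτ_nonneg_all hxτ hτ0 hρ (ρ + r - τm) (by linarith [hr.2])) (le_max_left _ _)
    linarith
  have hΨτm0 : 0 ≤ Ψ τm := hΨ0 ▸ hmono1 0 τm le_rfl hτ0.le le_rfl
  -- phase 2 exponential formula
  have hexp : ∀ u, τm ≤ u → Ψ u = Ψ τm * Real.exp (u - τm) := by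
    intro T hT
    set H : ℝ → ℝ := fun w => ∫ s in τm..w, Ψ s with hHdef
    set F : ℝ → ℝ := fun w => (Ψ τm + H w) * Real.exp (-w) with hFdef
    have hHd : ∀ w, HasDerivAt H (Ψ w) w := fun w =>
      (hΨc.integral_hasStrictDerivAt τm w).hasDerivAt
    have hFd : ∀ w, τm ≤ w → HasDerivAt F 0 w := by
      intro w hw
      have h1 : HasDerivAt (fun w => Ψ τm + H w) (Ψ w) w := (hHd w).const_add _
      have h2 : HasDerivAt (fun w => Real.exp (-w)) (-Real.exp (-w)) w := by
        simpa using (hasDerivAt_neg w).exp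
      have h3 := h1.mul h2
      have h4 : Ψ τm + H w = Ψ w := by
        rw [hid2 w hw]
      rw [hFdef]
      have h5 : Ψ w * Real.exp (-w) + (Ψ τm + H w) * -Real.exp (-w) = 0 := by
        rw [h4]
        ring
      exact h3.congr_deriv h5
    have hFc : ContinuousOn F (Icc τm T) := by
      apply Continuous.continuousOn
      rw [hFdef]
      refine (continuous_const.add ?_).mul (Real.continuous_exp.comp continuous_neg)
      exact intervalIntegral.continuous_primitive (fun a b => hΨc.intervalIntegrable a b) τm
    have hcst := constant_of_has_deriv_right_zero hFc
      (fun w hw => ((hFd w hw.1).hasDerivWithinAt))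
    have hFT := hcst T ⟨hT, le_rfl⟩
    have hFτm : F τm = Ψ τm * Real.exp (-τm) := by
      rw [hFdef]
      simp only [hHdef, intervalIntegral.integral_same, add_zero]
    rw [hFτm] at hFT
    have h5 : Ψ T = Ψ τm + H T := hid2 T hT
    have h6 : (Ψ τm + H T) * Real.exp (-T) = Ψ τm * Real.exp (-τm) := hFT
    have h7 : Ψ τm + H T = Ψ τm * Real.exp (-τm) * Real.exp T := by
      have hmul := congrArg (fun z => z * Real.exp T) h6
      rw [mul_assoc (Ψ τm + H T), ← Real.exp_add, neg_add_cancel, Real.exp_zero, mul_one]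
        at hmul
      exact hmul
    rw [h5, h7, mul_assoc, ← Real.exp_add]
    have harg : -τm + T = T - τm := by ring
    rw [harg]
  -- global monotonicity and nonnegativity of Ψ on [0,∞)
  have hmono : ∀ a b : ℝ, 0 ≤ a → a ≤ b → Ψ a ≤ Ψ b := by
    intro a b ha hab
    rcases le_total b τm with hb | hb
    · exact hmono1 a b ha hab hb
    · rcases le_total a τm with ha2 | ha2
      · calc Ψ a ≤ Ψ τm := hmono1 a τm ha ha2 le_rfl
          _ = Ψ τm * 1 := (mul_one _).symm
          _ ≤ Ψ τm * Real.exp (b - τm) := by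
              apply mul_le_mul_of_nonneg_left _ hΨτm0
              rw [← Real.exp_zero]
              exact Real.exp_le_exp.2 (by linarith)
          _ = Ψ b := (hexp b hb).symm
      · rw [hexp a ha2, hexp b (ha2.trans hab)]
        exact mul_le_mul_of_nonneg_left (Real.exp_le_exp.2 (by linarith)) hΨτm0
  have hΨnn : ∀ u, 0 ≤ u → 0 ≤ Ψ u := fun u hu => hΨ0 ▸ hmono 0 u le_rfl hu
  -- defect function
  set E : ℝ → ℝ := fun u => |x u| - M₀ * Ψ (u - t₁) with hEdef
  have hEc : Continuous E := by
    rw [hEdef]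
    exact hxc.abs.sub (continuous_const.mul (hΨc.comp (continuous_id.sub continuous_const)))
  set D : ℝ → ℝ := fun t => sSup (E '' Icc t₁ t) with hDdef
  set Dp : ℝ → ℝ := fun t => max (D t) 0 with hDpdef
  have hDub : ∀ t, t₁ ≤ t → ∀ u ∈ Icc t₁ t, E u ≤ D t := by
    intro t ht u hu
    exact le_csSup (isCompact_Icc.bddAbove_image hEc.continuousOn) (Set.mem_image_of_mem E hu)
  have hDmono : ∀ a b, t₁ ≤ a → a ≤ b → Dp a ≤ Dp b := by
    intro a b ha hab
    refine max_le_max ?_ le_rfl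
    refine csSup_le_csSup (isCompact_Icc.bddAbove_image hEc.continuousOn)
      ⟨E t₁, Set.mem_image_of_mem E ⟨le_rfl, ha⟩⟩
      (Set.image_mono (f := E) (Icc_subset_Icc le_rfl hab))
  have hDp0 : ∀ t, 0 ≤ Dp t := fun t => le_max_right _ _
  have hDpbound : ∀ u t, t₁ ≤ u → u ≤ t → E u ≤ Dp t :=
    fun u t hu ht => (hDub t (hu.trans ht) u ⟨hu, ht⟩).trans (le_max_left _ _)
  have hDpint : ∀ a b, t₁ ≤ a → a ≤ b → IntervalIntegrable Dp volume a b := by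
    intro a b ha hab
    apply MonotoneOn.intervalIntegrable
    intro u hu v hv huv
    rw [Set.uIcc_of_le hab] at hu hv
    exact hDmono u v (ha.trans hu.1) huv
  have ht₁t₀ : t₀ ≤ t₁ := by linarith
  -- the key integral inequality
  have hgc : Continuous fun s => M₀ * max (xτ (ρ + (s - t₁) - τm)) (Ψ (s - t₁)) := by
    apply continuous_const.mul
    exact (hxτ.1.comp ((continuous_const.add (continuous_id.sub continuous_const)).sub
      continuous_const)).max (hΨc.comp (continuous_id.sub continuous_const))
  have hID1 : ∀ t ∈ Icc t₁ (t₁ + τm),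
      (∫ s in t₁..t, M₀ * max (xτ (ρ + (s - t₁) - τm)) (Ψ (s - t₁))) = M₀ * Ψ (t - t₁) := by
    intro t ht
    rw [intervalIntegral.integral_const_mul]
    congr 1
    have hcv := intervalIntegral.integral_comp_sub_right (a := t₁) (b := t)
      (fun r => max (xτ (ρ + r - τm)) (Ψ r)) t₁
    rw [sub_self] at hcv
    rw [hcv, ← hid1 (t - t₁) ⟨by linarith [ht.1], by linarith [ht.2]⟩]
  have hID2 : ∀ t, t₁ + τm ≤ t →
      (∫ s in (t₁ + τm)..t, M₀ * Ψ (s - t₁)) = M₀ * (Ψ (t - t₁) - Ψ τm) := by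
    intro t ht
    rw [intervalIntegral.integral_const_mul]
    congr 1
    have hcv := intervalIntegral.integral_comp_sub_right (a := t₁ + τm) (b := t) Ψ t₁
    have he : t₁ + τm - t₁ = τm := by ring
    rw [he] at hcv
    rw [hcv]
    have := hid2 (t - t₁) (by linarith)
    linarith
  have hstep : ∀ t, t₁ ≤ t → E t ≤ ∫ s in t₁..t, Dp s := by
    have hcase1 : ∀ t, t₁ ≤ t → t ≤ t₁ + τm → E t ≤ ∫ s in t₁..t, Dp s := by
      intro t ht htm
      set g : ℝ → ℝ := fun s => M₀ * max (xτ (ρ + (s - t₁) - τm)) (Ψ (s - t₁)) + Dp s with hgdef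
      have hgint : IntervalIntegrable g volume t₁ t :=
        (hgc.intervalIntegrable _ _).add (hDpint t₁ t le_rfl ht)
      have hbound : ∀ s ∈ Set.Icc t₁ t, |x (τd s)| ≤ g s := by
        intro s hs
        have hsτ : s - τm ≤ τd s := by
          have := hub s (ht₁t₀.trans hs.1); linarith
        rcases le_or_gt (τd s) t₁ with h | h
        · have h1 := hP2 (τd s) ⟨by linarith [hs.1], h⟩
          have h2 : xτ (ρ - (t₁ - τd s)) ≤ xτ (ρ + (s - t₁) - τm) := by
            apply xτ_anti_all hxτ hτ0 hρ
            · exact mem_Iic.2 (by linarith [hs.2, htm])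
            · exact mem_Iic.2 (by linarith)
            · linarith
          calc |x (τd s)| ≤ M₀ * xτ (ρ - (t₁ - τd s)) := h1
            _ ≤ M₀ * xτ (ρ + (s - t₁) - τm) := mul_le_mul_of_nonneg_left h2 hM0
            _ ≤ M₀ * max (xτ (ρ + (s - t₁) - τm)) (Ψ (s - t₁)) :=
                mul_le_mul_of_nonneg_left (le_max_left _ _) hM0
            _ ≤ g s := le_add_of_nonneg_right (hDp0 s)
        · have h1 : E (τd s) ≤ Dp s := hDpbound (τd s) s h.le (hτdle s)
          have h2 : Ψ (τd s - t₁) ≤ Ψ (s - t₁) :=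
            hmono _ _ (by linarith) (by linarith [hτdle s])
          have h3 : |x (τd s)| ≤ M₀ * Ψ (τd s - t₁) + Dp s := by
            have := h1; rw [hEdef] at this; simp only at this; linarith
          calc |x (τd s)| ≤ M₀ * Ψ (τd s - t₁) + Dp s := h3
            _ ≤ M₀ * Ψ (s - t₁) + Dp s := by
                have := mul_le_mul_of_nonneg_left h2 hM0; linarith
            _ ≤ g s := by
                have : Ψ (s - t₁) ≤ max (xτ (ρ + (s - t₁) - τm)) (Ψ (s - t₁)) := le_max_right _ _
                have := mul_le_mul_of_nonneg_left this hM0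
                simp only [hgdef]
                linarith
      have hm := master_est p τd x t₀ τm hτ0.le hpm hploc hτdm hτdle hx hp1 hub
        t₁ t ht₁t₀ ht g hgint hbound
      rw [hzero, sub_zero] at hm
      have hsplit : (∫ s in t₁..t, g s)
          = (∫ s in t₁..t, M₀ * max (xτ (ρ + (s - t₁) - τm)) (Ψ (s - t₁)))
            + ∫ s in t₁..t, Dp s :=
        intervalIntegral.integral_add (hgc.intervalIntegrable _ _) (hDpint t₁ t le_rfl ht)
      rw [hsplit, hID1 t ⟨ht, htm⟩] at hm
      rw [hEdef]
      simp only
      linarith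
    intro t ht
    rcases le_or_gt t (t₁ + τm) with htm | htm
    · exact hcase1 t ht htm
    · -- second regime
      set g₂ : ℝ → ℝ := fun s => M₀ * Ψ (s - t₁) + Dp s with hg₂def
      have hg₂c : Continuous fun s => M₀ * Ψ (s - t₁) :=
        continuous_const.mul (hΨc.comp (continuous_id.sub continuous_const))
      have hg₂int : IntervalIntegrable g₂ volume (t₁ + τm) t :=
        (hg₂c.intervalIntegrable _ _).add (hDpint _ _ (by linarith) htm.le)
      have hbound2 : ∀ s ∈ Set.Icc (t₁ + τm) t, |x (τd s)| ≤ g₂ s := by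
        intro s hs
        have hsτ : s - τm ≤ τd s := by
          have := hub s (by linarith [hs.1]); linarith
        have hτd1 : t₁ ≤ τd s := by linarith [hs.1]
        have h1 : E (τd s) ≤ Dp s := hDpbound (τd s) s hτd1 (hτdle s)
        have h2 : Ψ (τd s - t₁) ≤ Ψ (s - t₁) :=
          hmono _ _ (by linarith) (by linarith [hτdle s])
        have h3 : |x (τd s)| ≤ M₀ * Ψ (τd s - t₁) + Dp s := by
          have := h1; rw [hEdef] at this; simp only at this; linarith
        have h4 := mul_le_mul_of_nonneg_left h2 hM0
        simp only [hg₂def]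
        linarith
      have hm := master_est p τd x t₀ τm hτ0.le hpm hploc hτdm hτdle hx hp1 hub
        (t₁ + τm) t (by linarith) htm.le g₂ hg₂int hbound2
      have hm1 := hcase1 (t₁ + τm) (by linarith) le_rfl
      have hsplit2 : (∫ s in (t₁ + τm)..t, g₂ s)
          = (∫ s in (t₁ + τm)..t, M₀ * Ψ (s - t₁)) + ∫ s in (t₁ + τm)..t, Dp s :=
        intervalIntegral.integral_add (hg₂c.intervalIntegrable _ _)
          (hDpint _ _ (by linarith) htm.le)
      rw [hsplit2, hID2 t htm.le] at hm
      have hadj := intervalIntegral.integral_add_adjacent_intervals (μ := volume)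
        (a := t₁) (b := t₁ + τm) (c := t) (f := Dp)
        (hDpint _ _ le_rfl (by linarith)) (hDpint _ _ (by linarith) htm.le)
      have htri : |x t| ≤ |x (t₁ + τm)| + |x t - x (t₁ + τm)| := by
        have := abs_add_le (x (t₁ + τm)) (x t - x (t₁ + τm))
        simpa using this
      rw [hEdef] at hm1 ⊢
      simp only at hm1 ⊢
      have he2 : t₁ + τm - t₁ = τm := by ring
      rw [he2] at hm1
      linarith
  -- Gronwall
  have hDkey : ∀ t, t₁ ≤ t → Dp t ≤ ∫ s in t₁..t, Dp s := by
    intro t ht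
    refine max_le ?_ (intervalIntegral.integral_nonneg ht (fun s _ => hDp0 s))
    refine csSup_le ⟨E t₁, Set.mem_image_of_mem E ⟨le_rfl, ht⟩⟩ ?_
    rintro y ⟨u, hu, rfl⟩
    calc E u ≤ ∫ s in t₁..u, Dp s := hstep u hu.1
      _ ≤ ∫ s in t₁..t, Dp s := by
          have hadj := intervalIntegral.integral_add_adjacent_intervals (μ := volume)
            (a := t₁) (b := u) (c := t) (f := Dp)
            (hDpint _ _ le_rfl hu.1) (hDpint _ _ hu.1 hu.2)
          have : 0 ≤ ∫ s in u..t, Dp s :=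
            intervalIntegral.integral_nonneg hu.2 (fun s _ => hDp0 s)
          linarith
  have hiter : ∀ T, t₁ ≤ T → ∀ n : ℕ, ∀ t ∈ Icc t₁ T,
      Dp t ≤ Dp T * (t - t₁) ^ n / (n.factorial : ℝ) := by
    intro T hT n
    induction n with
    | zero =>
      intro t ht
      simpa using hDmono t T ht.1 ht.2
    | succ n IHn =>
      intro t ht
      have h1 := hDkey t ht.1
      have h2 : (∫ s in t₁..t, Dp s)
          ≤ ∫ s in t₁..t, Dp T * (s - t₁) ^ n / (n.factorial : ℝ) := by
        refine intervalIntegral.integral_mono_on ht.1 (hDpint _ _ le_rfl ht.1) ?_ ?_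
        · exact ((continuous_const.mul ((continuous_id.sub continuous_const).pow n)).div_const
            _).intervalIntegrable _ _
        · intro s hs
          exact IHn s ⟨hs.1, hs.2.trans ht.2⟩
      have h3 : (∫ s in t₁..t, Dp T * (s - t₁) ^ n / (n.factorial : ℝ))
          = Dp T / (n.factorial : ℝ) * ∫ s in t₁..t, (s - t₁) ^ n := by
        rw [← intervalIntegral.integral_const_mul]
        congr 1; funext s; ring
      have h4 : (∫ s in t₁..t, (s - t₁) ^ n) = (t - t₁) ^ (n + 1) / (n + 1 : ℝ) := by
        have hcv := intervalIntegral.integral_comp_sub_right (a := t₁) (b := t)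
          (fun r => r ^ n) t₁
        rw [sub_self] at hcv
        rw [hcv, integral_pow]
        simp
      calc Dp t ≤ ∫ s in t₁..t, Dp s := h1
        _ ≤ ∫ s in t₁..t, Dp T * (s - t₁) ^ n / (n.factorial : ℝ) := h2
        _ = Dp T / (n.factorial : ℝ) * ((t - t₁) ^ (n + 1) / (n + 1 : ℝ)) := by rw [h3, h4]
        _ = Dp T * (t - t₁) ^ (n + 1) / ((n + 1).factorial : ℝ) := by
            rw [Nat.factorial_succ]
            push_cast
            rw [div_mul_div_comm]
            congr 1
            ring
  have hDzero : ∀ t, t₁ ≤ t → Dp t ≤ 0 := by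
    intro t ht
    have hlim : Tendsto (fun n : ℕ => Dp t * (t - t₁) ^ n / (n.factorial : ℝ))
        atTop (𝓝 0) := by
      have := FloorSemiring.tendsto_pow_div_factorial_atTop (K := ℝ) (t - t₁)
      have h2 := this.const_mul (Dp t)
      rw [mul_zero] at h2
      convert h2 using 2 with n
      ring
    refine ge_of_tendsto' hlim fun n => ?_
    exact hiter t ht n t ⟨ht, le_rfl⟩
  intro t ht
  have h1 : E t ≤ Dp t := hDpbound t t ht le_rfl
  have h2 := hDzero t ht
  rw [hEdef] at h1
  simp only at h1
  rw [← hΨeq (t - t₁) (by linarith)]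
  linarith


theorem stmt10 (p τd : ℝ → ℝ) (hpm : Measurable p)
    (hploc : MeasureTheory.LocallyIntegrable p)
    (hτdm : Measurable τd) (hτdle : ∀ t, τd t ≤ t)
    (hτdinf : Filter.Tendsto τd Filter.atTop Filter.atTop)
    (t₀ : ℝ) (x : ℝ → ℝ) (hx : IsDelaySolution p τd t₀ x)
    (hosc : Oscillatory x)
    (hp1 : ∀ᵐ t : ℝ ∂volume, |p t| = 1)
    (τm : ℝ) (hτm : IsLUB {y : ℝ | ∃ t ≥ t₀, y = t - τd t} τm)
    (hτmI : τm ∈ Ioc (1 / Real.exp 1) 2)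
    (xτ : ℝ → ℝ) (hxτ : IsXSol τm xτ) (ρ : ℝ) (hρ : ρ = firstRoot xτ)
    (ψ : ℝ → ℝ) (hψ : IsPsiSol τm ρ xτ ψ)
    (t₁ : ℝ) (ht₁ : t₀ + τm + ρ ≤ t₁) (hzero : x t₁ = 0)
    (M₀ : ℝ) (hM₀ : M₀ = sSup ((fun v => |x v|) '' Icc (t₁ - τm - ρ) t₁)) :
    (∀ t ≥ t₁, |x t| ≤ M₀ * ψ (t - t₁)) ∧
    (∀ t ∈ Icc (t₁ - τm) t₁, |x t| ≤ M₀ * xτ (ρ - (t₁ - t))) := by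
  have hτ0 : 0 < τm := lt_trans (by positivity) hτmI.1
  have hub : ∀ s, t₀ ≤ s → s - τd s ≤ τm := fun s hs => hτm.1 ⟨s, hs, rfl⟩
  have hρ0 : 0 ≤ ρ := ρ_nonneg hxτ hτ0 hρ
  have hwin : t₁ - τm - ρ ≤ t₁ := by linarith
  have himg : BddAbove ((fun v => |x v|) '' Icc (t₁ - τm - ρ) t₁) :=
    isCompact_Icc.bddAbove_image hx.1.abs.continuousOn
  have hM : ∀ v ∈ Icc (t₁ - τm - ρ) t₁, |x v| ≤ M₀ := by
    intro v hv
    rw [hM₀]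
    exact le_csSup himg ⟨v, hv, rfl⟩
  have hM0 : 0 ≤ M₀ := by
    have := hM t₁ ⟨hwin, le_rfl⟩
    rw [hzero] at this
    simpa using this
  have hP2 : ∀ v ∈ Icc (t₁ - τm) t₁, |x v| ≤ M₀ * xτ (ρ - (t₁ - v)) :=
    part2_full p τd x t₀ τm hτ0 hpm hploc hτdm hτdle hx hp1 hub
      xτ hxτ ρ hρ t₁ M₀ ht₁ hzero hM0 hM
  exact ⟨part1_core p τd x t₀ τm hτ0 hpm hploc hτdm hτdle hx hp1 hub
      xτ hxτ ρ hρ ψ hψ t₁ M₀ ht₁ hzero hM0 hP2, hP2⟩
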